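/- Let G=(X,Y,U,V) be a two-player game with X and Y nonempty convex subsets of real topological vector spaces, U and V continuous, U(·,y) q-concave for every y ∈ Y, and V(x,·) q-concave for every x ∈ X. If (x',y') is a (u0,v0)-constrained Nash equilibrium of G that is not a Nash equilibrium of G, then U(x',y') = u0 or V(x',y') = v0. -/

import Mathlib

/-- `f` is q-concave on the convex set `C`: whenever `f s ≥ c` and `f s' > c`,
all strict convex combinations of `s` and `s'` have value `> c`. -/
def QConcaveOn {E : Type*} [AddCommGroup E] [Module ℝ E] (C : Set E) (f : E → ℝ) : Prop :=
  ∀ s ∈ C, ∀ s' ∈ C, ∀ c : ℝ, c ≤ f s → c < f s' →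
    ∀ t : ℝ, 0 < t → t < 1 → c < f ((1 - t) • s + t • s')

/-- In a q-concave continuous game, a constrained Nash equilibrium that is not a
Nash equilibrium gives at least one of the players exactly his/her outside option. -/
theorem qconcave_constrained_equilibrium_payoff
    {E F : Type*}
    [AddCommGroup E] [Module ℝ E] [TopologicalSpace E]
    [IsTopologicalAddGroup E] [ContinuousSMul ℝ E]
    [AddCommGroup F] [Module ℝ F] [TopologicalSpace F]
    [IsTopologicalAddGroup F] [ContinuousSMul ℝ F]
    (X : Set E) (Y : Set F) (hXne : X.Nonempty) (hYne : Y.Nonempty)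
    (hXconv : Convex ℝ X) (hYconv : Convex ℝ Y)
    (U V : E → F → ℝ)
    (hUc : ContinuousOn (fun p : E × F => U p.1 p.2) (X ×ˢ Y))
    (hVc : ContinuousOn (fun p : E × F => V p.1 p.2) (X ×ˢ Y))
    (hUq : ∀ y ∈ Y, QConcaveOn X fun x => U x y)
    (hVq : ∀ x ∈ X, QConcaveOn Y fun y => V x y)
    (u0 v0 : ℝ) (x' : E) (y' : F) (hx' : x' ∈ X) (hy' : y' ∈ Y)
    (hfeas : u0 ≤ U x' y' ∧ v0 ≤ V x' y')
    (hcne1 : ∀ x ∈ X, U x' y' < U x y' → V x y' < v0)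
    (hcne2 : ∀ y ∈ Y, V x' y' < V x' y → U x' y < u0)
    (hnotNash : ¬ ((∀ x ∈ X, U x y' ≤ U x' y') ∧ (∀ y ∈ Y, V x' y ≤ V x' y'))) :
    U x' y' = u0 ∨ V x' y' = v0 := by

  rcases not_and_or.mp hnotNash with h | h
  · push_neg at h
    obtain ⟨x, hxX, hlt⟩ := h
    right
    refine le_antisymm ?_ hfeas.2
    set g : ℝ → ℝ := fun t => V ((1 - t) • x' + t • x) y' with hg
    have hmem : ∀ t ∈ Set.Icc (0:ℝ) 1, ((1 - t) • x' + t • x) ∈ X := by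
      intro t ht
      exact hXconv hx' hxX (by linarith [ht.2]) ht.1 (by ring)
    have hgc : ContinuousOn g (Set.Icc 0 1) := by
      have hmap : Continuous (fun t : ℝ => (((1 - t) • x' + t • x), y')) := by
        fun_prop
      exact hVc.comp hmap.continuousOn fun t ht => ⟨hmem t ht, hy'⟩
    have hten : Filter.Tendsto g (nhdsWithin 0 (Set.Ioo (0:ℝ) 1)) (nhds (g 0)) := by
      have := (hgc 0 (by constructor <;> norm_num)).tendsto
      exact this.mono_left (nhdsWithin_mono _ Set.Ioo_subset_Icc_self)
    haveI : (nhdsWithin (0:ℝ) (Set.Ioo (0:ℝ) 1)).NeBot :=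
      left_nhdsWithin_Ioo_neBot (by norm_num)
    have hle : g 0 ≤ v0 := by
      refine le_of_tendsto hten ?_
      filter_upwards [self_mem_nhdsWithin] with t ht
      exact (hcne1 _ (hmem t (Set.Ioo_subset_Icc_self ht))
        (hUq y' hy' x' hx' x hxX _ le_rfl hlt t ht.1 ht.2)).le
    simpa [hg] using hle
  · push_neg at h
    obtain ⟨y, hyY, hlt⟩ := h
    left
    refine le_antisymm ?_ hfeas.1
    set g : ℝ → ℝ := fun t => U x' ((1 - t) • y' + t • y) with hg
    have hmem : ∀ t ∈ Set.Icc (0:ℝ) 1, ((1 - t) • y' + t • y) ∈ Y := by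
      intro t ht
      exact hYconv hy' hyY (by linarith [ht.2]) ht.1 (by ring)
    have hgc : ContinuousOn g (Set.Icc 0 1) := by
      have hmap : Continuous (fun t : ℝ => (x', ((1 - t) • y' + t • y))) := by
        fun_prop
      exact hUc.comp hmap.continuousOn fun t ht => ⟨hx', hmem t ht⟩
    have hten : Filter.Tendsto g (nhdsWithin 0 (Set.Ioo (0:ℝ) 1)) (nhds (g 0)) := by
      have := (hgc 0 (by constructor <;> norm_num)).tendsto
      exact this.mono_left (nhdsWithin_mono _ Set.Ioo_subset_Icc_self)
    haveI : (nhdsWithin (0:ℝ) (Set.Ioo (0:ℝ) 1)).NeBot :=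
      left_nhdsWithin_Ioo_neBot (by norm_num)
    have hle : g 0 ≤ u0 := by
      refine le_of_tendsto hten ?_
      filter_upwards [self_mem_nhdsWithin] with t ht
      exact (hcne2 _ (hmem t (Set.Ioo_subset_Icc_self ht))
        (hVq x' hx' y' hy' y hyY _ le_rfl hlt t ht.1 ht.2)).le
    simpa [hg] using hle
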